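/- Let R be a commutative ring, let f be the generalized Fibonacci sequence of parameters t_1, …, t_{k₁} ∈ R and g the generalized Fibonacci sequence of parameters u_1, …, u_{k₂} ∈ R. Write the product of the two core polynomials as (X^{k₁} − t_1 X^{k₁−1} − ⋯ − t_{k₁}) · (X^{k₂} − u_1 X^{k₂−1} − ⋯ − u_{k₂}) = X^{k} − v_1 X^{k−1} − ⋯ − v_k with k = k₁ + k₂. Then the Cauchy convolution f ⋆ g is exactly the generalized Fibonacci sequence of parameters v_1, …, v_k (the core of a convolution product is the product of the cores). In particular, if R is an integral domain and t_{k₁} ≠ 0 and u_{k₂} ≠ 0, then v_k = −(−t_{k₁})(−u_{k₂}) ≠ 0, so the degree of a convolution product is the sum of the degrees of the factors. -/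

import Mathlib

open Polynomial Finset

section GFPConvAux

variable {R : Type*} [CommRing R]

private lemma my_reflect_sum {ι : Type*} (s : Finset ι) (p : ι → R[X]) (N : ℕ) :
    reflect N (∑ j ∈ s, p j) = ∑ j ∈ s, reflect N (p j) := by
  ext i
  simp [coeff_reflect, finset_sum_coeff]

private lemma my_reflect_core (k : ℕ) (w : ℕ → R) :
    reflect k ((X : R[X]) ^ k - ∑ j ∈ Icc 1 k, C (w j) * X ^ (k - j)) =
      1 - ∑ j ∈ Icc 1 k, C (w j) * X ^ j := by
  rw [reflect_sub, my_reflect_sum]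
  congr 1
  · rw [show (X:R[X])^k = C 1 * X ^ k by simp, reflect_C_mul_X_pow, revAt_le le_rfl]
    simp
  · refine Finset.sum_congr rfl fun j hj => ?_
    rw [reflect_C_mul_X_pow, revAt_le (Nat.sub_le _ _)]
    simp only [mem_Icc] at hj
    congr 2
    omega

private lemma my_core_natDegree_le (k : ℕ) (w : ℕ → R) :
    ((X : R[X]) ^ k - ∑ j ∈ Icc 1 k, C (w j) * X ^ (k - j)).natDegree ≤ k := by
  refine le_trans (natDegree_sub_le _ _) (max_le (natDegree_X_pow_le k)
    (Polynomial.natDegree_sum_le_of_forall_le _ _ fun j hj =>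
      le_trans (natDegree_C_mul_le _ _) ((natDegree_X_pow_le _).trans (Nat.sub_le _ _))))

private lemma my_coeff_core_mul (k : ℕ) (w h : ℕ → R) (n : ℕ) :
    (PowerSeries.coeff n) (((1 - ∑ j ∈ Icc 1 k, C (w j) * X ^ j : R[X]) : PowerSeries R)
        * PowerSeries.mk h) =
      h n - ∑ j ∈ Icc 1 (min n k), w j * h (n - j) := by
  rw [PowerSeries.coeff_mul, Finset.Nat.sum_antidiagonal_eq_sum_range_succ_mk]
  have hc : ∀ i, (PowerSeries.coeff i)
      (((1 - ∑ j ∈ Icc 1 k, C (w j) * X ^ j : R[X]) : PowerSeries R))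
      = (if i = 0 then 1 else 0) - (if i ∈ Icc 1 k then w i else 0) := by
    intro i
    rw [Polynomial.coeff_coe]
    simp [coeff_sub, finset_sum_coeff, coeff_C_mul, coeff_X_pow,
      mul_ite, mul_one, mul_zero, Finset.sum_ite_eq, coeff_one]
  simp only [hc, PowerSeries.coeff_mk, sub_mul, ite_mul, one_mul, zero_mul,
    Finset.sum_sub_distrib]
  congr 1
  · rw [Finset.sum_ite_eq' (range (n+1)) 0 (fun i => h (n - i))]
    simp
  · rw [← Finset.sum_filter]
    refine Finset.sum_congr ?_ fun _ _ => rfl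
    ext x
    simp only [mem_filter, mem_range, mem_Icc, lt_min_iff]
    omega

private lemma my_core_mul_mk (k : ℕ) (w h : ℕ → R) (h0 : h 0 = 1)
    (hrec : ∀ n, 1 ≤ n → h n = ∑ j ∈ Icc 1 (min n k), w j * h (n - j)) :
    ((1 - ∑ j ∈ Icc 1 k, C (w j) * X ^ j : R[X]) : PowerSeries R) * PowerSeries.mk h = 1 := by
  ext n
  rw [my_coeff_core_mul, PowerSeries.coeff_one]
  rcases Nat.eq_zero_or_pos n with rfl | hn
  · simp [h0]
  · rw [if_neg (by omega), hrec n hn, sub_self]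

private lemma my_core_coeff_zero (k : ℕ) (hk : 1 ≤ k) (w : ℕ → R) :
    ((X : R[X]) ^ k - ∑ j ∈ Icc 1 k, C (w j) * X ^ (k - j)).coeff 0 = - w k := by
  rw [coeff_sub, coeff_X_pow, if_neg (by omega), finset_sum_coeff]
  simp only [coeff_C_mul, coeff_X_pow]
  rw [Finset.sum_eq_single k (fun j hj hjk => ?_) (fun hk' => ?_)]
  · simp
  · simp only [mem_Icc] at hj
    rw [if_neg (by omega), mul_zero]
  · exact absurd (mem_Icc.mpr ⟨hk, le_rfl⟩) hk'

end GFPConvAux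

open Polynomial Finset in
/-- The core of a convolution product of two GFP sequences is the product of the
cores, and (over a domain) the degree of a convolution product is the sum of the
degrees of the factors. -/
theorem core_of_convolution_product {R : Type*} [CommRing R]
    (k₁ k₂ : ℕ) (hk₁ : 1 ≤ k₁) (hk₂ : 1 ≤ k₂) (t u v : ℕ → R) (f g : ℕ → R)
    (hf0 : f 0 = 1)
    (hf : ∀ n, 1 ≤ n → f n = ∑ j ∈ Icc 1 (min n k₁), t j * f (n - j))
    (hg0 : g 0 = 1)
    (hg : ∀ n, 1 ≤ n → g n = ∑ j ∈ Icc 1 (min n k₂), u j * g (n - j))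
    (hv : (X ^ k₁ - ∑ j ∈ Icc 1 k₁, C (t j) * X ^ (k₁ - j)) *
          (X ^ k₂ - ∑ j ∈ Icc 1 k₂, C (u j) * X ^ (k₂ - j)) =
          X ^ (k₁ + k₂) - ∑ j ∈ Icc 1 (k₁ + k₂), C (v j) * X ^ (k₁ + k₂ - j)) :
    ((∑ i ∈ range (0 + 1), f i * g (0 - i)) = 1 ∧
      ∀ n, 1 ≤ n →
        (∑ i ∈ range (n + 1), f i * g (n - i)) =
          ∑ j ∈ Icc 1 (min n (k₁ + k₂)),
            v j * ∑ i ∈ range ((n - j) + 1), f i * g ((n - j) - i)) ∧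
    (IsDomain R → t k₁ ≠ 0 → u k₂ ≠ 0 →
      v (k₁ + k₂) = -((-t k₁) * (-u k₂)) ∧ v (k₁ + k₂) ≠ 0) := by
  have hrefl := congrArg (reflect (k₁ + k₂)) hv
  rw [reflect_mul _ _ (my_core_natDegree_le k₁ t) (my_core_natDegree_le k₂ u),
      my_reflect_core, my_reflect_core, my_reflect_core] at hrefl
  refine ⟨⟨by simp [hf0, hg0], fun n hn => ?_⟩, fun _ ht hu => ?_⟩
  · -- the recurrence for the convolution
    have hmk : PowerSeries.mk (fun m => ∑ i ∈ range (m + 1), f i * g (m - i)) =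
        PowerSeries.mk f * PowerSeries.mk g := by
      ext m
      rw [PowerSeries.coeff_mul, Finset.Nat.sum_antidiagonal_eq_sum_range_succ_mk]
      simp
    have hps : ((1 - ∑ j ∈ Icc 1 (k₁ + k₂), C (v j) * X ^ j : R[X]) : PowerSeries R) *
        PowerSeries.mk (fun m => ∑ i ∈ range (m + 1), f i * g (m - i)) = 1 := by
      rw [← hrefl, Polynomial.coe_mul, hmk, mul_mul_mul_comm,
        my_core_mul_mk k₁ t f hf0 hf, my_core_mul_mk k₂ u g hg0 hg, mul_one]
    have hcoeff := congrArg (PowerSeries.coeff (R := R) n) hps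
    rw [my_coeff_core_mul, PowerSeries.coeff_one, if_neg (by omega)] at hcoeff
    exact sub_eq_zero.mp hcoeff
  · have h0 := congrArg (fun p : R[X] => p.coeff 0) hv
    simp only [Polynomial.mul_coeff_zero] at h0
    rw [my_core_coeff_zero k₁ hk₁ t, my_core_coeff_zero k₂ hk₂ u,
      my_core_coeff_zero (k₁ + k₂) (by omega) v] at h0
    have hne : t k₁ * u k₂ ≠ 0 := mul_ne_zero ht hu
    have hveq : v (k₁ + k₂) = -(t k₁ * u k₂) := by linear_combination h0
    exact ⟨by rw [hveq]; ring, by rw [hveq]; simpa using hne⟩
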